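/- arXiv:2306.09439 — 5 statements merged into one kernel-verified Lean document; each statement's English description precedes it below -/
import Mathlib

section
/- For s ∈ ℂ with Re(s) > -1/2, the function f_s(z) = (1-z)^s (principal branch) belongs to H²(𝔻) and is an eigenvector of the composition operator C_{φ_a} with eigenvalue a^s: f_s ∘ φ_a = a^s · f_s. -/
open Complex Metric Filter Asymptotics Finset
open Complex Metric Filter Asymptotics Finset

lemma aux_mul_cpow {a : ℝ} (ha : 0 < a) {w : ℂ} (hw : w ≠ 0) (s : ℂ) :
    ((a:ℂ) * w) ^ s = (a:ℂ) ^ s * w ^ s := by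
  have ha' : (a:ℂ) ≠ 0 := by exact_mod_cast ha.ne'
  rw [Complex.cpow_def_of_ne_zero (mul_ne_zero ha' hw),
    Complex.cpow_def_of_ne_zero ha', Complex.cpow_def_of_ne_zero hw,
    Complex.log_ofReal_mul ha hw, Complex.ofReal_log ha.le, add_mul, Complex.exp_add]

lemma aux_iteratedDeriv (s : ℂ) (n : ℕ) : ∀ z : ℂ, (1 - z) ∈ Complex.slitPlane →
    iteratedDeriv n (fun w : ℂ => (1 - w) ^ s) z
      = (∏ k ∈ Finset.range n, ((k : ℂ) - s)) * (1 - z) ^ (s - n) := by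
  induction n with
  | zero => intro z hz; simp
  | succ n ih =>
    intro z hz
    have hopen : IsOpen {z : ℂ | 1 - z ∈ Complex.slitPlane} :=
      Complex.isOpen_slitPlane.preimage (by fun_prop)
    have hev : iteratedDeriv n (fun w : ℂ => (1 - w) ^ s) =ᶠ[nhds z]
        (fun w => (∏ k ∈ Finset.range n, ((k : ℂ) - s)) * (1 - w) ^ (s - n)) :=
      Filter.eventuallyEq_of_mem (hopen.mem_nhds hz) (fun w hw => ih w hw)
    have h1 : HasDerivAt (fun w : ℂ => 1 - w) (-1) z := by
      simpa using (hasDerivAt_id z).const_sub 1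
    have hd : HasDerivAt (fun w : ℂ => (1 - w) ^ (s - n))
        ((s - n) * (1 - z) ^ (s - n - 1) * (-1)) z := h1.cpow_const hz
    rw [iteratedDeriv_succ, hev.deriv_eq, deriv_const_mul _ hd.differentiableAt, hd.deriv,
      Finset.prod_range_succ]
    have : (s - ↑n - 1 : ℂ) = s - ↑(n + 1) := by push_cast; ring
    rw [this]; ring


lemma aux_summable (s : ℂ) (hs : -(1/2) < s.re) :
    Summable (fun n : ℕ => ‖(∏ k ∈ Finset.range n, ((k : ℂ) - s)) / (n.factorial : ℂ)‖ ^ 2) := by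
  by_cases hint : ∃ m : ℕ, s = (m : ℂ)
  · obtain ⟨m, rfl⟩ := hint
    apply summable_of_ne_finset_zero (s := Finset.range (m + 1))
    intro n hn
    rw [Finset.mem_range, not_lt] at hn
    have : (∏ k ∈ Finset.range n, ((k : ℂ) - (m : ℂ))) = 0 :=
      Finset.prod_eq_zero (i := m) (Finset.mem_range.mpr (by omega)) (sub_self _)
    simp [this]
  · push_neg at hint
    set t : ℂ := -s with htdef
    have ht : ∀ m : ℕ, t ≠ -(m : ℂ) := fun m h => hint m (neg_injective (htdef ▸ h))
    have hΓ : Complex.Gamma t ≠ 0 := Complex.Gamma_ne_zero ht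
    -- rewrite the product
    have hprod : ∀ n : ℕ, (∏ k ∈ Finset.range n, ((k : ℂ) - s))
        = ∏ k ∈ Finset.range n, (t + k) :=
      fun n => Finset.prod_congr rfl fun k _ => by rw [htdef]; ring
    have hfac : ∀ j : ℕ, (t + j) ≠ 0 := fun j h => ht j (by linear_combination h)
    have hP : ∀ n : ℕ, (∏ j ∈ Finset.range n, (t + j)) ≠ 0 :=
      fun n => Finset.prod_ne_zero_iff.mpr fun j _ => hfac j
    have hGne : ∀ n : ℕ, 1 ≤ n → Complex.GammaSeq t n ≠ 0 := by
      intro n hn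
      rw [Complex.GammaSeq]
      apply div_ne_zero (mul_ne_zero _ _) (hP (n+1))
      · exact fun h => (Complex.norm_natCast_cpow_pos_of_pos hn t).ne' (by simp [h])
      · exact_mod_cast (Nat.factorial_ne_zero n)
    -- norm of the coefficient for n ≥ 1
    have hkey : ∀ n : ℕ, 1 ≤ n →
        ‖(∏ k ∈ Finset.range n, (t + (k:ℂ))) / (n.factorial : ℂ)‖
          = (n : ℝ) ^ t.re / (‖Complex.GammaSeq t n‖ * ‖t + n‖) := by
      intro n hn
      have hnpos : (0:ℕ) < n := hn
      have hPn : (∏ j ∈ Finset.range n, (t + (j:ℂ)))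
          = (n:ℂ) ^ t * n.factorial / (Complex.GammaSeq t n * (t + n)) := by
        have h1 : Complex.GammaSeq t n
            = (n:ℂ) ^ t * n.factorial / ((∏ j ∈ Finset.range n, (t + (j:ℂ))) * (t + n)) := by
          rw [Complex.GammaSeq, Finset.prod_range_succ]
        have hden : (∏ j ∈ Finset.range n, (t + (j:ℂ))) * (t + n) ≠ 0 :=
          mul_ne_zero (hP n) (hfac n)
        have h2 : Complex.GammaSeq t n * ((∏ j ∈ Finset.range n, (t + (j:ℂ))) * (t + n))
            = (n:ℂ) ^ t * n.factorial := by
          rw [h1, div_mul_cancel₀ _ hden]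
        rw [eq_div_iff (mul_ne_zero (hGne n hn) (hfac n))]
        linear_combination h2
      rw [hPn, norm_div, norm_div, norm_mul, norm_mul,
        Complex.norm_natCast_cpow_of_pos hnpos]
      have hf0 : ‖(n.factorial : ℂ)‖ ≠ 0 :=
        norm_ne_zero_iff.mpr (by exact_mod_cast Nat.factorial_ne_zero n)
      have hG0 : ‖Complex.GammaSeq t n‖ ≠ 0 := norm_ne_zero_iff.mpr (hGne n hn)
      have ht0 : ‖t + (n:ℂ)‖ ≠ 0 := norm_ne_zero_iff.mpr (hfac n)
      have hfr : ((n.factorial : ℝ)) ≠ 0 := by positivity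
      field_simp
    -- limits
    have hGlim : Filter.Tendsto (fun n => ‖Complex.GammaSeq t n‖) Filter.atTop
        (nhds ‖Complex.Gamma t‖) := (Complex.GammaSeq_tendsto_Gamma t).norm
    have hqlim : Filter.Tendsto (fun n : ℕ => (t + n) / n) Filter.atTop (nhds 1) := by
      have h0 : Filter.Tendsto (fun n : ℕ => t / (n:ℂ)) Filter.atTop (nhds 0) := by
        rw [tendsto_zero_iff_norm_tendsto_zero]
        have : ∀ n : ℕ, ‖t / (n:ℂ)‖ = ‖t‖ / n := by
          intro n; rw [norm_div, Complex.norm_natCast]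
        simpa [this] using tendsto_const_div_atTop_nhds_zero_nat ‖t‖
      have h1 : Filter.Tendsto (fun n : ℕ => t / (n:ℂ) + 1) Filter.atTop (nhds (0 + 1)) :=
        h0.add tendsto_const_nhds
      rw [zero_add] at h1
      apply h1.congr'
      filter_upwards [Filter.eventually_ge_atTop 1] with n hn
      have hn0 : (n:ℂ) ≠ 0 := Nat.cast_ne_zero.mpr (by omega)
      field_simp
    have hinvlim : Filter.Tendsto (fun n : ℕ => (n:ℝ) / ‖t + n‖) Filter.atTop (nhds 1) := by
      have h1 : Filter.Tendsto (fun n : ℕ => ‖((t + n)/n : ℂ)‖⁻¹) Filter.atTop (nhds 1) := by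
        have := (hqlim.norm).inv₀ (by simp)
        simpa using this
      apply h1.congr'
      filter_upwards [Filter.eventually_ge_atTop 1] with n hn
      rw [norm_div, Complex.norm_natCast, inv_div]
    -- the ratio tends to a finite limit
    set F : ℕ → ℝ := fun n => ‖(∏ k ∈ Finset.range n, ((k:ℂ) - s)) / (n.factorial : ℂ)‖ ^ 2
      with hFdef
    set g : ℕ → ℝ := fun n => (n:ℝ) ^ (2 * t.re - 2) with hgdef
    have hdiv : Filter.Tendsto (F / g) Filter.atTop
        (nhds ((‖Complex.Gamma t‖ ^ 2)⁻¹ * 1 ^ 2)) := by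
      have hlim : Filter.Tendsto
          (fun n : ℕ => (‖Complex.GammaSeq t n‖ ^ 2)⁻¹ * ((n:ℝ) / ‖t + n‖) ^ 2)
          Filter.atTop (nhds ((‖Complex.Gamma t‖ ^ 2)⁻¹ * 1 ^ 2)) :=
        ((hGlim.pow 2).inv₀ (pow_ne_zero 2 (norm_ne_zero_iff.mpr hΓ))).mul (hinvlim.pow 2)
      apply hlim.congr'
      filter_upwards [Filter.eventually_ge_atTop 1] with n hn
      have hnR : (0:ℝ) < (n:ℝ) := by exact_mod_cast Nat.lt_of_lt_of_le Nat.zero_lt_one hn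
      have hFn : F n = ((n : ℝ) ^ t.re / (‖Complex.GammaSeq t n‖ * ‖t + n‖)) ^ 2 := by
        simp only [hFdef, hprod n, hkey n hn]
      have e1 : ((n:ℝ) ^ t.re) ^ 2 = (n:ℝ) ^ (2 * t.re - 2) * (n:ℝ) ^ (2:ℝ) := by
        rw [← Real.rpow_natCast ((n:ℝ) ^ t.re) 2, ← Real.rpow_mul hnR.le,
          ← Real.rpow_add hnR]
        congr 1
        push_cast; ring
      have hG0 : ‖Complex.GammaSeq t n‖ ≠ 0 := norm_ne_zero_iff.mpr (hGne n hn)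
      have ht0 : ‖t + (n:ℂ)‖ ≠ 0 := norm_ne_zero_iff.mpr (hfac n)
      have hg0 : (n:ℝ) ^ (2 * t.re - 2) ≠ 0 := (Real.rpow_pos_of_pos hnR _).ne'
      have e2 : (n:ℝ) ^ (2:ℝ) = (n:ℝ) ^ (2:ℕ) := by
        rw [← Real.rpow_natCast (n:ℝ) 2]; norm_num
      simp only [Pi.div_apply]
      rw [eq_div_iff hg0, hFn, div_pow, div_pow, mul_pow, e2] at *
      rw [e1]
      field_simp
      ring
      norm_num
    -- conclude summability
    have hO : F =O[Filter.atTop] g := by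
      apply isBigO_of_div_tendsto_nhds _ _ hdiv
      filter_upwards [Filter.eventually_ge_atTop 1] with n hn h
      have hnR : (0:ℝ) < (n:ℝ) := by exact_mod_cast Nat.lt_of_lt_of_le Nat.zero_lt_one hn
      exact absurd h (Real.rpow_pos_of_pos hnR _).ne'
    have hgsum : Summable g := by
      apply Real.summable_nat_rpow.mpr
      have : t.re = -s.re := by rw [htdef, Complex.neg_re]
      rw [this]; linarith
    exact summable_of_isBigO_nat hgsum hO

noncomputable def hardyCoeff (f : ℂ → ℂ) (n : ℕ) : ℂ := iteratedDeriv n f 0 / n.factorial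

/-- `f` belongs to the Hardy space `H²(𝔻)`: it is holomorphic on the unit disk and its
Taylor coefficients at `0` are square-summable. -/
def MemH2 (f : ℂ → ℂ) : Prop :=
  AnalyticOnNhd ℂ f (ball (0:ℂ) 1) ∧ Summable (fun n => ‖hardyCoeff f n‖ ^ 2)

theorem fs_memH2_and_eigenvector (a : ℝ) (ha : a ∈ Set.Ioo (0:ℝ) 1)
    (s : ℂ) (hs : -(1/2) < s.re) :
    MemH2 (fun z : ℂ => (1 - z) ^ s) ∧
    ∀ z ∈ ball (0:ℂ) 1, (1 - (a * z + 1 - a)) ^ s = (a:ℂ) ^ s * (1 - z) ^ s := by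
  have hslit : ∀ z ∈ ball (0:ℂ) 1, (1 : ℂ) - z ∈ Complex.slitPlane := by
    intro z hz
    rw [mem_ball_zero_iff] at hz
    refine Or.inl ?_
    have : z.re ≤ ‖z‖ := Complex.re_le_norm z
    simp only [Complex.sub_re, Complex.one_re]
    linarith
  refine ⟨⟨?_, ?_⟩, ?_⟩
  · refine DifferentiableOn.analyticOnNhd (fun z hz => ?_) isOpen_ball
    exact (((differentiableAt_const (1:ℂ)).sub differentiableAt_id).cpow
      (differentiableAt_const s) (hslit z hz)).differentiableWithinAt
  · have hc : ∀ n : ℕ, hardyCoeff (fun z : ℂ => (1 - z) ^ s) n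
        = (∏ k ∈ Finset.range n, ((k:ℂ) - s)) / n.factorial := by
      intro n
      unfold hardyCoeff
      rw [aux_iteratedDeriv s n 0 (by norm_num)]
      norm_num
    simp only [hc]
    exact aux_summable s hs
  · intro z hz
    rw [mem_ball_zero_iff] at hz
    have hw : (1 : ℂ) - z ≠ 0 := by
      intro h
      have : z = 1 := by linear_combination -h
      rw [this] at hz; norm_num at hz
    have h1 : 1 - ((a:ℂ) * z + 1 - a) = (a:ℂ) * (1 - z) := by ring
    rw [h1, aux_mul_cpow ha.1 hw s]
end

section
/- Let a ∈ (0,1) and t = 2πi/log(a). Then the function g = f_t, g(z) = (1-z)^{2πi/log a}, satisfies g(1 - a^n) = 1 for all natural numbers n, and g is a fixed point of the composition operator C_{φ_a} (i.e., g ∘ φ_a = g). -/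
open Complex Metric Real

theorem ft_fixed_point (a : ℝ) (ha : a ∈ Set.Ioo (0:ℝ) 1) :
    (∀ n : ℕ, ((1:ℂ) - (1 - (a:ℂ)^n)) ^ ((2 * π * I) / (Real.log a : ℂ)) = 1) ∧
    (∀ z ∈ ball (0:ℂ) 1,
      ((1:ℂ) - (a * z + 1 - a)) ^ ((2 * π * I) / (Real.log a : ℂ))
        = ((1:ℂ) - z) ^ ((2 * π * I) / (Real.log a : ℂ))) := by
  obtain ⟨ha0, ha1⟩ := ha
  have hla : Real.log a ≠ 0 := Real.log_ne_zero_of_pos_of_ne_one ha0 ha1.ne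
  have hlaC : (Real.log a : ℂ) ≠ 0 := by exact_mod_cast hla
  have haC : (a : ℂ) ≠ 0 := by exact_mod_cast ha0.ne'
  have h2 : (Real.log a : ℂ) * ((2 * π * I) / (Real.log a : ℂ)) = 2 * π * I := by
    field_simp
  have key : Complex.exp ((Real.log a : ℂ) * ((2 * π * I) / (Real.log a : ℂ))) = 1 := by
    rw [h2]
    simpa using Complex.exp_int_mul_two_pi_mul_I 1
  constructor
  · intro n
    have hne : ((a:ℂ))^n ≠ 0 := pow_ne_zero _ haC
    have h1 : (1:ℂ) - (1 - (a:ℂ)^n) = ((a:ℝ)^n : ℝ) := by push_cast; ring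
    have hlog : Complex.log ((a^n : ℝ):ℂ) = (n:ℂ) * (Real.log a : ℂ) := by
      rw [← Complex.ofReal_log (by positivity : (0:ℝ) ≤ a^n), Real.log_pow]
      push_cast; ring
    rw [h1, cpow_def_of_ne_zero (by exact_mod_cast hne : ((a^n : ℝ):ℂ) ≠ 0), hlog,
      mul_assoc, h2]
    simpa using Complex.exp_int_mul_two_pi_mul_I n
  · intro z hz
    have hz1 : (1:ℂ) - z ≠ 0 := by
      intro h
      have : z = 1 := by linear_combination -h
      simp [this] at hz
    have h1 : (1:ℂ) - (a * z + 1 - a) = (a:ℂ) * (1 - z) := by ring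
    rw [h1, cpow_def_of_ne_zero (mul_ne_zero haC hz1),
      Complex.log_ofReal_mul ha0 hz1, add_mul, Complex.exp_add, key, one_mul,
      ← cpow_def_of_ne_zero hz1]
end

section
/- If some derivative f^{(n)} (n ≥ 1) of f ∈ H²(𝔻) is bounded on a disk D_m of center 1 - a^m and radius a^m, then f is not a hypercyclic vector for the composition operator C_{φ_a}: the orbit {C_{φ_a}^k f : k ≥ 0} is not dense in H²(𝔻). -/
open Complex Metric Filter

/-- The `H²` norm of `f`, computed from Taylor coefficients. -/
noncomputable def h2Norm (f : ℂ → ℂ) : ℝ := Real.sqrt (∑' n, ‖hardyCoeff f n‖ ^ 2)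

/-- The  inner product. -/
noncomputable def h2Inner (f g : ℂ → ℂ) : ℂ :=
  ∑' n, hardyCoeff f n * (starRingEnd ℂ) (hardyCoeff g n)

open Topology

/-- coefficient extraction -/
lemma coeff_extract {g : ℂ → ℂ} {P : FormalMultilinearSeries ℂ ℂ ℂ} {x : ℂ}
    (h : HasFPowerSeriesAt g P x) (j : ℕ) :
    P.coeff j = iteratedDeriv j g x / (j.factorial : ℂ) := by
  obtain ⟨r, hr⟩ := h
  have h1 : (j.factorial) • P j (fun _ ↦ (1:ℂ)) = iteratedFDeriv ℂ j g x (fun _ ↦ 1) :=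
    hr.factorial_smul 1 j
  rw [iteratedDeriv_eq_iteratedFDeriv, ← h1, FormalMultilinearSeries.coeff, nsmul_eq_mul]
  have hj : (j.factorial : ℂ) ≠ 0 := by exact_mod_cast j.factorial_ne_zero
  have : (1 : Fin j → ℂ) = fun _ => 1 := rfl
  rw [this]
  field_simp

lemma hardyCoeff_extract {g : ℂ → ℂ} {P : FormalMultilinearSeries ℂ ℂ ℂ}
    (h : HasFPowerSeriesAt g P 0) (j : ℕ) : hardyCoeff g j = P.coeff j :=
  (coeff_extract h j).symm

/-- taylor expansion on unit ball -/
lemma hasSum_taylor {f : ℂ → ℂ} (hfd : DifferentiableOn ℂ f (ball (0:ℂ) 1))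
    {x : ℂ} (hx : ‖x‖ < 1) :
    HasSum (fun i => hardyCoeff f i * x ^ i) (f x) := by
  have h2 : (0:ℝ) ≤ (1 + ‖x‖)/2 := by positivity
  set R : NNReal := ⟨(1 + ‖x‖)/2, h2⟩ with hRdef
  have hRx : ‖x‖ < (R : ℝ) := by rw [hRdef]; show ‖x‖ < (1 + ‖x‖)/2; linarith
  have hR1 : (R:ℝ) < 1 := by rw [hRdef]; show (1 + ‖x‖)/2 < 1; linarith
  have hR0 : 0 < R := by
    rw [← NNReal.coe_pos, hRdef]; show (0:ℝ) < (1 + ‖x‖)/2; positivity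
  have hball : closedBall (0:ℂ) R ⊆ ball 0 1 := closedBall_subset_ball hR1
  have H := (hfd.mono hball).hasFPowerSeriesOnBall hR0
  have hx' : x ∈ Metric.eball (0:ℂ) R := by
    rw [Metric.mem_eball, edist_zero_right, enorm_eq_nnnorm]
    exact_mod_cast hRx
  have hs := H.hasSum hx'
  rw [zero_add] at hs
  have : (fun i => hardyCoeff f i * x ^ i)
      = fun i => (cauchyPowerSeries f 0 R) i fun _ => x := by
    funext i
    rw [FormalMultilinearSeries.apply_eq_pow_smul_coeff,
      ← hardyCoeff_extract H.hasFPowerSeriesAt, smul_eq_mul, mul_comm]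
  rw [this]
  exact hs

section
variable {f : ℂ → ℂ} {w c : ℂ}

lemma hasFPowerSeriesAt_comp_affine {p : FormalMultilinearSeries ℂ ℂ ℂ}
    (hp : HasFPowerSeriesAt f p w) :
    HasFPowerSeriesAt (fun z => f (c * z + w)) (fun j => c ^ j • p j) 0 := by
  apply hasFPowerSeriesAt_iff.mpr
  have h0 : Tendsto (fun z : ℂ => c * z) (𝓝 0) (𝓝 0) := by
    have := (tendsto_id (x := 𝓝 (0:ℂ))).const_mul c
    simpa using this
  filter_upwards [h0.eventually (hasFPowerSeriesAt_iff.mp hp)] with z hz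
  have e1 : (fun i => z ^ i • FormalMultilinearSeries.coeff (fun j => c ^ j • p j) i)
      = fun i => (c * z) ^ i • p.coeff i := by
    funext i
    simp only [FormalMultilinearSeries.coeff, ContinuousMultilinearMap.smul_apply,
      smul_eq_mul, mul_pow]
    ring
  rw [e1]
  have e2 : c * (0 + z) + w = w + c * z := by ring
  rw [e2]
  exact hz

lemma hardyCoeff_comp_affine (hf : AnalyticAt ℂ f w) (j : ℕ) :
    hardyCoeff (fun z => f (c * z + w)) j = c ^ j * (iteratedDeriv j f w / j.factorial) := by
  obtain ⟨p, hp⟩ := hf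
  have h := hasFPowerSeriesAt_comp_affine (c := c) hp
  rw [hardyCoeff_extract h j]
  have : FormalMultilinearSeries.coeff (fun j => c ^ j • p j) j = c ^ j * p.coeff j := by
    show (c ^ j • p j) 1 = c ^ j * (p j 1)
    rw [ContinuousMultilinearMap.smul_apply, smul_eq_mul]
  rw [this, coeff_extract hp j]

/-- generic binomial hasSum -/
lemma binom_hasSum {R : Type*} [CommSemiring R] [TopologicalSpace R] (u v : R) (i : ℕ) :
    HasSum (fun j => (i.choose j : R) * u ^ j * v ^ (i - j)) ((u + v) ^ i) := by
  have h := hasSum_sum_of_ne_finset_zero (L := SummationFilter.unconditional ℕ) (s := Finset.range (i+1))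
    (f := fun j => (i.choose j : R) * u ^ j * v ^ (i - j)) (fun j hj => by
      simp [Nat.choose_eq_zero_of_lt (by simpa using hj)])
  convert h using 1
  rw [add_pow]
  apply Finset.sum_congr rfl
  intro j hj
  ring

/-- the Schur kernel -/
noncomputable def Kern (c : ℝ) (j i : ℕ) : ℝ := (i.choose j : ℝ) * (c ^ j * (1-c) ^ (i - j))

section kern
variable {c : ℝ} (hc0 : 0 < c) (hc1 : c ≤ 1)
include hc0 hc1

lemma Kern_nonneg (j i : ℕ) : 0 ≤ Kern c j i := by
  have : (0:ℝ) ≤ 1 - c := by linarith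
  unfold Kern
  positivity

omit hc0 hc1 in
lemma Kern_row (i : ℕ) (x : ℝ) :
    HasSum (fun j => Kern c j i * x ^ j) ((c * x + (1 - c)) ^ i) := by
  have h := binom_hasSum (c * x) (1 - c) i
  have e : (fun j => Kern c j i * x ^ j)
      = fun j => (i.choose j : ℝ) * (c * x) ^ j * (1 - c) ^ (i - j) := by
    funext j; unfold Kern; ring
  rw [e]; exact h

omit hc0 hc1 in
lemma Kern_row_c (i : ℕ) (z : ℂ) :
    HasSum (fun j => (Kern c j i : ℂ) * z ^ j) (((c:ℂ) * z + (1 - (c:ℂ))) ^ i) := by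
  have h := binom_hasSum ((c:ℂ) * z) (1 - (c:ℂ)) i
  have e : (fun j => (Kern c j i : ℂ) * z ^ j)
      = fun j => (i.choose j : ℂ) * ((c:ℂ) * z) ^ j * (1 - (c:ℂ)) ^ (i - j) := by
    funext j; unfold Kern; push_cast; ring
  rw [e]; exact h

omit hc1 in
lemma Kern_col (hw : |1 - c| < 1) (j : ℕ) : HasSum (fun i => Kern c j i) (1 / c) := by
  have h := hasSum_choose_mul_geometric_of_norm_lt_one (𝕜 := ℝ) j
    (r := 1 - c) (by rwa [Real.norm_eq_abs])
  have h2 := h.mul_left (c ^ j)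
  have e : (fun d => c ^ j * (((d + j).choose j : ℝ) * (1 - c) ^ d))
      = fun d => Kern c j (d + j) := by
    funext d; unfold Kern; rw [Nat.add_sub_cancel]; ring
  rw [e] at h2
  have h3 := (hasSum_nat_add_iff (f := fun i => Kern c j i) j).mp h2
  have e2 : ∑ i ∈ Finset.range j, Kern c j i = 0 := by
    apply Finset.sum_eq_zero
    intro i hi
    unfold Kern
    rw [Nat.choose_eq_zero_of_lt (Finset.mem_range.mp hi)]
    simp
  rw [e2, add_zero] at h3
  have e3 : c ^ j * (1 / (1 - (1 - c)) ^ (j + 1)) = 1 / c := by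
    have : 1 - (1 - c) = c := by ring
    rw [this, pow_succ]
    field_simp
  rwa [e3] at h3

end kern

lemma double_sum {α : Type*} [AddCommGroup α] [UniformSpace α] [IsUniformAddGroup α]
    [CompleteSpace α] [T2Space α] {G : ℕ × ℕ → α} (hG : Summable G) :
    Summable (fun j => ∑' i, G (i, j)) ∧ ∑' j, ∑' i, G (i, j) = ∑' i, ∑' j, G (i, j) := by
  refine ⟨hG.prod_symm.prod, ?_⟩
  exact Summable.tsum_comm' hG (fun i => hG.prod_factor i) (fun j => hG.prod_symm.prod_factor j)

section core
variable {c : ℝ}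

lemma pair_summable (hc0 : 0 < c) (hc1 : c ≤ 1) (β : ℕ → ℝ) (hβ0 : ∀ i, 0 ≤ β i)
    (x : ℝ) (hx : 0 ≤ x)
    (hsum : Summable fun i => β i * (c * x + (1 - c)) ^ i) :
    Summable (fun q : ℕ × ℕ => β q.1 * (Kern c q.2 q.1 * x ^ q.2)) := by
  rw [summable_prod_of_nonneg (by
    intro q
    exact mul_nonneg (hβ0 _) (mul_nonneg (Kern_nonneg hc0 hc1 _ _) (pow_nonneg hx _)))]
  constructor
  · intro i
    have h := ((Kern_row (c := c) i x).mul_left (β i)).summable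
    exact h.congr fun j => by ring
  · have e : (fun i => ∑' j, β i * (Kern c j i * x ^ j))
        = fun i => β i * (c * x + (1 - c)) ^ i := by
      funext i
      rw [tsum_mul_left, (Kern_row (c := c) i x).tsum_eq]
    rw [e]
    exact hsum

lemma core {f : ℂ → ℂ} (hfd : DifferentiableOn ℂ f (ball (0:ℂ) 1))
    (hf2 : Summable (fun i => ‖hardyCoeff f i‖ ^ 2)) (hc0 : 0 < c) (hc1 : c ≤ 1) :
    HasFPowerSeriesAt (fun z => f ((c:ℂ) * z + (1 - (c:ℂ))))
      (FormalMultilinearSeries.ofScalars ℂ (fun j => ∑' i, hardyCoeff f i * (Kern c j i : ℂ))) 0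
    ∧ Summable (fun j => ‖∑' i, hardyCoeff f i * (Kern c j i : ℂ)‖ ^ 2) := by
  have hw : |1 - c| < 1 := by rw [_root_.abs_of_nonneg (by linarith : (0:ℝ) ≤ 1 - c)]; linarith
  have hKnn := Kern_nonneg hc0 hc1
  set A : ℕ → ℝ := fun i => ‖hardyCoeff f i‖ with hAdef
  have hA0 : ∀ i, 0 ≤ A i := fun i => norm_nonneg _
  set B : ℝ := Real.sqrt (∑' i, A i ^ 2) with hBdef
  have hAB : ∀ i, A i ≤ B := by
    intro i
    have h1 : A i ^ 2 ≤ ∑' i, A i ^ 2 := Summable.le_tsum hf2 i fun j _ => sq_nonneg _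
    calc A i = Real.sqrt (A i ^ 2) := by rw [Real.sqrt_sq (hA0 i)]
      _ ≤ B := Real.sqrt_le_sqrt h1
  set r : ℕ → ℂ := fun j => ∑' i, hardyCoeff f i * (Kern c j i : ℂ) with hrdef
  have e_norm : ∀ j i, ‖hardyCoeff f i * (Kern c j i : ℂ)‖ = A i * Kern c j i := by
    intro j i
    rw [norm_mul, Complex.norm_real, Real.norm_eq_abs, _root_.abs_of_nonneg (hKnn j i)]
  have hcol : ∀ j, Summable (fun i => A i * Kern c j i) := by
    intro j
    refine Summable.of_nonneg_of_le (fun i => mul_nonneg (hA0 i) (hKnn j i))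
      (fun i => mul_le_mul_of_nonneg_right (hAB i) (hKnn j i))
      (((Kern_col hc0 hw j).summable).mul_left B)
  have hcolC : ∀ j, Summable (fun i => hardyCoeff f i * (Kern c j i : ℂ)) := by
    intro j
    refine Summable.of_norm ?_
    exact ((hcol j).congr (fun i => (e_norm j i).symm))
  constructor
  · rw [hasFPowerSeriesAt_iff]
    have hev : ∀ᶠ z : ℂ in nhds 0, ‖z‖ < 1 := by
      have : ball (0:ℂ) 1 ∈ nhds (0:ℂ) := ball_mem_nhds 0 one_pos
      filter_upwards [this] with z hz
      simpa [dist_zero_right] using hz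
    filter_upwards [hev] with z hz
    set u : ℂ := (c:ℂ) * z + (1 - (c:ℂ)) with hudef
    have hnu : ‖(1:ℂ) - (c:ℂ)‖ = 1 - c := by
      rw [show (1:ℂ) - (c:ℂ) = ((1 - c : ℝ) : ℂ) by push_cast; ring,
        Complex.norm_real, Real.norm_eq_abs, _root_.abs_of_nonneg (by linarith : (0:ℝ) ≤ 1 - c)]
    have hnc : ‖(c:ℂ) * z‖ = c * ‖z‖ := by
      rw [norm_mul, Complex.norm_real, Real.norm_eq_abs, _root_.abs_of_pos hc0]
    have hu : ‖u‖ < 1 := by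
      calc ‖u‖ ≤ ‖(c:ℂ) * z‖ + ‖(1:ℂ) - (c:ℂ)‖ := norm_add_le _ _
        _ = c * ‖z‖ + (1 - c) := by rw [hnu, hnc]
        _ < c * 1 + (1 - c) := by
            have := mul_lt_mul_of_pos_left hz hc0
            linarith
        _ = 1 := by ring
    set G : ℕ × ℕ → ℂ := fun q => hardyCoeff f q.1 * (Kern c q.2 q.1 : ℂ) * z ^ q.2 with hGdef
    have hGnorm : ∀ q : ℕ × ℕ, ‖G q‖ = A q.1 * (Kern c q.2 q.1 * ‖z‖ ^ q.2) := by
      intro q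
      rw [hGdef]
      simp only [norm_mul, norm_pow]
      rw [Complex.norm_real, Real.norm_eq_abs, _root_.abs_of_nonneg (hKnn _ _)]
      ring
    have hρ0 : 0 ≤ c * ‖z‖ + (1 - c) := by nlinarith [norm_nonneg z]
    have hρ1 : c * ‖z‖ + (1 - c) < 1 := by nlinarith [norm_nonneg z]
    have hN : Summable (fun q : ℕ × ℕ => A q.1 * (Kern c q.2 q.1 * ‖z‖ ^ q.2)) := by
      refine pair_summable hc0 hc1 A hA0 ‖z‖ (norm_nonneg z) ?_
      refine Summable.of_nonneg_of_le (fun i => mul_nonneg (hA0 i) (pow_nonneg hρ0 i))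
        (fun i => mul_le_mul_of_nonneg_right (hAB i) (pow_nonneg hρ0 i)) ?_
      exact (summable_geometric_of_lt_one hρ0 hρ1).mul_left B
    have hG : Summable G := by
      refine Summable.of_norm ?_
      exact hN.congr fun q => (hGnorm q).symm
    have hrow : ∀ i, HasSum (fun j => G (i, j)) (hardyCoeff f i * u ^ i) := by
      intro i
      have h := (Kern_row_c (c := c) i z).mul_left (hardyCoeff f i)
      have e : (fun j => G (i, j)) = fun j => hardyCoeff f i * ((Kern c j i : ℂ) * z ^ j) := by
        funext j; rw [hGdef]; ring
      rw [e]
      exact h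
    obtain ⟨hcolsum, hcomm⟩ := double_sum hG
    have hval : ∑' j, ∑' i, G (i, j) = f u := by
      rw [hcomm, tsum_congr (fun i => (hrow i).tsum_eq)]
      exact (hasSum_taylor hfd hu).tsum_eq
    have hco : ∀ j, (FormalMultilinearSeries.ofScalars ℂ r).coeff j = r j := by
      intro j
      calc (FormalMultilinearSeries.ofScalars ℂ r).coeff j
          = FormalMultilinearSeries.ofScalars ℂ r j (fun _ => 1) := rfl
        _ = r j • (1:ℂ) ^ j := FormalMultilinearSeries.ofScalars_apply_eq r 1 j
        _ = r j := by simp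
    have e : (fun j => z ^ j • (FormalMultilinearSeries.ofScalars ℂ r).coeff j)
        = fun j => ∑' i, G (i, j) := by
      funext j
      rw [hco, smul_eq_mul, mul_comm, ← tsum_mul_right]
    rw [e]
    show HasSum _ (f ((c:ℂ) * (0 + z) + (1 - (c:ℂ))))
    rw [zero_add, ← hudef, ← hval]
    exact hcolsum.hasSum
  · -- Schur bound
    set S : ℕ → ℝ := fun j => ∑' i, Kern c j i * A i ^ 2 with hSdef
    have hS_pair : Summable (fun q : ℕ × ℕ => A q.1 ^ 2 * (Kern c q.2 q.1 * (1:ℝ) ^ q.2)) := by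
      refine pair_summable hc0 hc1 (fun i => A i ^ 2) (fun i => sq_nonneg _) 1 zero_le_one ?_
      have : (fun i => A i ^ 2 * (c * 1 + (1 - c)) ^ i) = fun i => A i ^ 2 := by
        funext i
        rw [show c * 1 + (1 - c) = 1 by ring, one_pow, mul_one]
      rw [this]
      exact hf2
    have hS : Summable S := by
      have h := (double_sum hS_pair).1
      refine h.congr fun j => ?_
      rw [hSdef]
      exact tsum_congr fun i => by ring
    have hcS : ∀ j, Summable (fun i => Kern c j i * A i ^ 2) := by
      intro j
      have h := hS_pair.prod_symm.prod_factor j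
      exact h.congr fun i => by simp only [Prod.swap_prod_mk, one_pow]; ring
    have hS0 : ∀ j, 0 ≤ S j := by
      intro j
      exact tsum_nonneg fun i => mul_nonneg (hKnn j i) (sq_nonneg _)
    have key : ∀ j, ‖r j‖ ^ 2 ≤ (1 / c) * S j := by
      intro j
      have hrR : ‖r j‖ ≤ ∑' i, A i * Kern c j i := by
        have h1 := norm_tsum_le_tsum_norm ((hcol j).congr (fun i => (e_norm j i).symm))
        calc ‖r j‖ ≤ ∑' i, ‖hardyCoeff f i * (Kern c j i : ℂ)‖ := h1
          _ = ∑' i, A i * Kern c j i := tsum_congr (e_norm j)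
      have hRs : (∑' i, A i * Kern c j i) ≤ Real.sqrt ((1 / c) * S j) := by
        refine Summable.tsum_le_of_sum_le (hcol j) ?_
        intro s
        have hcs := Finset.sum_mul_sq_le_sq_mul_sq s (fun i => Real.sqrt (Kern c j i))
          (fun i => Real.sqrt (Kern c j i) * A i)
        have e1 : ∀ i, Real.sqrt (Kern c j i) * (Real.sqrt (Kern c j i) * A i)
            = A i * Kern c j i := by
          intro i
          rw [← mul_assoc, Real.mul_self_sqrt (hKnn j i)]
          ring
        have e2 : ∀ i, Real.sqrt (Kern c j i) ^ 2 = Kern c j i :=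
          fun i => Real.sq_sqrt (hKnn j i)
        have e3 : ∀ i, (Real.sqrt (Kern c j i) * A i) ^ 2 = Kern c j i * A i ^ 2 := by
          intro i
          rw [mul_pow, e2]
        rw [Finset.sum_congr rfl (fun i _ => e1 i)] at hcs
        rw [Finset.sum_congr rfl (fun i _ => e2 i)] at hcs
        rw [Finset.sum_congr rfl (fun i _ => e3 i)] at hcs
        have hb1 : ∑ i ∈ s, Kern c j i ≤ 1 / c := by
          rw [← (Kern_col hc0 hw j).tsum_eq]
          exact Summable.sum_le_tsum s (fun i _ => hKnn j i) (Kern_col hc0 hw j).summable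
        have hb2 : ∑ i ∈ s, Kern c j i * A i ^ 2 ≤ S j := by
          rw [hSdef]
          exact Summable.sum_le_tsum s (fun i _ => mul_nonneg (hKnn j i) (sq_nonneg _)) (hcS j)
        have hsum0 : 0 ≤ ∑ i ∈ s, A i * Kern c j i :=
          Finset.sum_nonneg fun i _ => mul_nonneg (hA0 i) (hKnn j i)
        rw [Real.le_sqrt hsum0 (mul_nonneg (by positivity) (hS0 j))]
        calc (∑ i ∈ s, A i * Kern c j i) ^ 2
            ≤ (∑ i ∈ s, Kern c j i) * ∑ i ∈ s, Kern c j i * A i ^ 2 := hcs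
          _ ≤ (1 / c) * S j := by
              apply mul_le_mul hb1 hb2 (Finset.sum_nonneg fun i _ =>
                mul_nonneg (hKnn j i) (sq_nonneg _)) (by positivity)
      calc ‖r j‖ ^ 2 ≤ (∑' i, A i * Kern c j i) ^ 2 := by
            apply pow_le_pow_left₀ (norm_nonneg _) hrR
        _ ≤ Real.sqrt ((1 / c) * S j) ^ 2 := by
            apply pow_le_pow_left₀ (tsum_nonneg fun i => mul_nonneg (hA0 i) (hKnn j i)) hRs
        _ = (1 / c) * S j := Real.sq_sqrt (mul_nonneg (by positivity) (hS0 j))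
    refine Summable.of_nonneg_of_le (fun j => sq_nonneg _) key (hS.mul_left (1 / c))

lemma ofScalars_coeff (r : ℕ → ℂ) (j : ℕ) :
    (FormalMultilinearSeries.ofScalars ℂ r).coeff j = r j := by
  calc (FormalMultilinearSeries.ofScalars ℂ r).coeff j
      = FormalMultilinearSeries.ofScalars ℂ r j (fun _ => 1) := rfl
    _ = r j • (1:ℂ) ^ j := FormalMultilinearSeries.ofScalars_apply_eq r 1 j
    _ = r j := by simp

end core

theorem not_hypercyclic_of_deriv_EB' (a : ℝ) (ha : a ∈ Set.Ioo (0:ℝ) 1)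
    (f : ℂ → ℂ) (hf : (AnalyticOnNhd ℂ f (ball (0:ℂ) 1) ∧ Summable (fun n => ‖hardyCoeff f n‖ ^ 2)))
    (n : ℕ) (hn : 1 ≤ n) (m : ℕ) (C : ℝ)
    (hC : ∀ z ∈ ball (1 - ((a:ℂ))^m) (a^m), ‖iteratedDeriv n f z‖ ≤ C) :
    ¬ (∀ g : ℂ → ℂ, (AnalyticOnNhd ℂ g (ball (0:ℂ) 1) ∧ Summable (fun n => ‖hardyCoeff g n‖ ^ 2)) → ∀ ε > 0, ∃ k : ℕ,
        Real.sqrt (∑' j, ‖hardyCoeff (g - fun z => f ((a:ℂ)^k * z + 1 - (a:ℂ)^k)) j‖ ^ 2) < ε) := by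
  intro H
  obtain ⟨ha0, ha1⟩ := ha
  have hfd : DifferentiableOn ℂ f (ball 0 1) := hf.1.differentiableOn
  have hf2 := hf.2
  have hck0 : ∀ k : ℕ, 0 < a ^ k := fun k => pow_pos ha0 k
  have hck1 : ∀ k : ℕ, a ^ k ≤ 1 := fun k => pow_le_one₀ ha0.le ha1.le
  set Fk : ℕ → ℂ → ℂ := fun k => fun z => f ((a:ℂ)^k * z + 1 - (a:ℂ)^k) with hFkdef
  have hFk_eq : ∀ k, Fk k = fun z => f ((((a^k : ℝ)):ℂ) * z + (1 - ((a^k : ℝ):ℂ))) := by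
    intro k
    funext z
    rw [hFkdef]
    congr 1
    push_cast
    ring
  set r : ℕ → ℕ → ℂ := fun k j => ∑' i, hardyCoeff f i * (Kern (a^k) j i : ℂ) with hrdef
  have hcore : ∀ k, HasFPowerSeriesAt (Fk k)
      (FormalMultilinearSeries.ofScalars ℂ (r k)) 0
      ∧ Summable (fun j => ‖r k j‖ ^ 2) := by
    intro k
    rw [hFk_eq k]
    exact core hfd hf2 (hck0 k) (hck1 k)
  have hFk_coeff : ∀ k j, hardyCoeff (Fk k) j = r k j := by
    intro k j
    rw [hardyCoeff_extract (hcore k).1 j, ofScalars_coeff]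
  -- derivative form at index n
  have hwmem : ∀ k : ℕ, (1 - ((a^k:ℝ):ℂ)) ∈ ball (0:ℂ) 1 := by
    intro k
    rw [mem_ball, dist_zero_right, show (1:ℂ) - ((a^k:ℝ):ℂ) = ((1 - a^k : ℝ):ℂ) by push_cast; ring,
      Complex.norm_real, Real.norm_eq_abs, _root_.abs_of_nonneg (by linarith [hck1 k])]
    linarith [hck0 k]
  have hFk_n : ∀ k, hardyCoeff (Fk k) n
      = ((a^k:ℝ):ℂ) ^ n * (iteratedDeriv n f (1 - ((a^k:ℝ):ℂ)) / n.factorial) := by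
    intro k
    rw [hFk_eq k]
    exact hardyCoeff_comp_affine (hf.1 _ (hwmem k)) n
  have hC0 : 0 ≤ C :=
    le_trans (norm_nonneg _) (hC _ (mem_ball_self (pow_pos ha0 m)))
  have hbound : ∀ k, m ≤ k → ‖hardyCoeff (Fk k) n‖ ≤ C / n.factorial := by
    intro k hkm
    have hball : (1 - ((a^k:ℝ):ℂ)) ∈ ball (1 - ((a:ℂ))^m) (a^m) := by
      rw [mem_ball, dist_eq_norm, show (1 - ((a^k:ℝ):ℂ)) - (1 - ((a:ℂ))^m)
        = ((a^m - a^k : ℝ):ℂ) by push_cast; ring, Complex.norm_real, Real.norm_eq_abs,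
        _root_.abs_of_nonneg (by linarith [pow_le_pow_of_le_one ha0.le ha1.le hkm])]
      linarith [hck0 k]
    have hCd := hC _ hball
    rw [hFk_n k]
    rw [norm_mul, norm_pow, Complex.norm_real, Real.norm_eq_abs,
      _root_.abs_of_pos (hck0 k), norm_div]
    have hnf : ‖((n.factorial : ℕ) : ℂ)‖ = (n.factorial : ℝ) := by
      rw [show ((n.factorial : ℕ) : ℂ) = ((n.factorial : ℝ) : ℂ) by push_cast; rfl,
        Complex.norm_real, Real.norm_eq_abs, _root_.abs_of_nonneg (by positivity)]
    rw [hnf]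
    have h1 : (a^k)^n ≤ 1 := pow_le_one₀ (hck0 k).le (hck1 k)
    have h2 : ‖iteratedDeriv n f (1 - ((a^k:ℝ):ℂ))‖ / (n.factorial : ℝ) ≤ C / n.factorial :=
      div_le_div_of_nonneg_right hCd (by positivity) |>.trans_eq rfl
    calc (a^k)^n * (‖iteratedDeriv n f (1 - ((a^k:ℝ):ℂ))‖ / (n.factorial : ℝ))
        ≤ 1 * (C / n.factorial) := by
          apply mul_le_mul h1 h2 (by positivity) zero_le_one
      _ = C / n.factorial := one_mul _
  set M : ℝ := C / n.factorial + ∑ k ∈ Finset.range m, ‖hardyCoeff (Fk k) n‖ with hMdef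
  have hsum_nonneg : 0 ≤ ∑ k ∈ Finset.range m, ‖hardyCoeff (Fk k) n‖ :=
    Finset.sum_nonneg fun k _ => norm_nonneg _
  have hM0 : 0 ≤ M := by
    rw [hMdef]; positivity
  have hMb : ∀ k, ‖hardyCoeff (Fk k) n‖ ≤ M := by
    intro k
    rcases lt_or_ge k m with hk | hk
    · have := Finset.single_le_sum (f := fun k => ‖hardyCoeff (Fk k) n‖)
        (fun i _ => norm_nonneg _) (Finset.mem_range.mpr hk)
      rw [hMdef]
      have : (0:ℝ) ≤ C / n.factorial := by positivity
      linarith [Finset.single_le_sum (f := fun k => ‖hardyCoeff (Fk k) n‖)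
        (fun i _ => norm_nonneg _) (Finset.mem_range.mpr hk)]
    · rw [hMdef]
      linarith [hbound k hk]
  -- the monomial test function
  set δ : ℕ → ℂ := fun j => if j = n then ((M + 2 : ℝ) : ℂ) else 0 with hδdef
  set g : ℂ → ℂ := fun z => ((M + 2 : ℝ) : ℂ) * z ^ n with hgdef
  have hPg : HasFPowerSeriesAt g (FormalMultilinearSeries.ofScalars ℂ δ) 0 := by
    rw [hasFPowerSeriesAt_iff]
    refine Filter.Eventually.of_forall fun z => ?_
    have e : (fun j => z ^ j • (FormalMultilinearSeries.ofScalars ℂ δ).coeff j)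
        = fun j => if j = n then ((M + 2 : ℝ) : ℂ) * z ^ n else 0 := by
      funext j
      rw [ofScalars_coeff, hδdef]
      by_cases hj : j = n
      · simp [hj, smul_eq_mul, mul_comm]
      · simp [hj]
    rw [e]
    have : g (0 + z) = ((M + 2 : ℝ) : ℂ) * z ^ n := by rw [zero_add]
    rw [this]
    exact hasSum_ite_eq n _
  have hgcoeff : ∀ j, hardyCoeff g j = δ j := by
    intro j
    rw [hardyCoeff_extract hPg j, ofScalars_coeff]
  have hδ2 : Summable (fun j => ‖δ j‖ ^ 2) := by
    apply summable_of_ne_finset_zero (s := {n})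
    intro j hj
    rw [hδdef]
    simp [Finset.mem_singleton.not.mp hj]
  have hg2 : Summable (fun j => ‖hardyCoeff g j‖ ^ 2) := by
    refine hδ2.congr fun j => ?_
    rw [hgcoeff j]
  have hgMem : AnalyticOnNhd ℂ g (ball (0:ℂ) 1) ∧ Summable (fun j => ‖hardyCoeff g j‖ ^ 2) := by
    refine ⟨fun x _ => ?_, hg2⟩
    exact analyticAt_const.mul ((analyticAt_id).pow n)
  obtain ⟨k, hk⟩ := H g hgMem 1 one_pos
  have hsub : HasFPowerSeriesAt (g - Fk k)
      (FormalMultilinearSeries.ofScalars ℂ δ - FormalMultilinearSeries.ofScalars ℂ (r k)) 0 :=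
    hPg.sub (hcore k).1
  have hDcoeff : ∀ j, hardyCoeff (g - Fk k) j = δ j - r k j := by
    intro j
    rw [hardyCoeff_extract hsub j]
    have : (FormalMultilinearSeries.ofScalars ℂ δ
        - FormalMultilinearSeries.ofScalars ℂ (r k)).coeff j
        = (FormalMultilinearSeries.ofScalars ℂ δ).coeff j
          - (FormalMultilinearSeries.ofScalars ℂ (r k)).coeff j := rfl
    rw [this, ofScalars_coeff, ofScalars_coeff]
  have hDsum : Summable (fun j => ‖hardyCoeff (g - Fk k) j‖ ^ 2) := by
    refine Summable.of_nonneg_of_le (fun j => sq_nonneg _) (fun j => ?_)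
      ((hδ2.mul_left 2).add (((hcore k).2).mul_left 2))
    rw [hDcoeff j]
    have h1 : ‖δ j - r k j‖ ≤ ‖δ j‖ + ‖r k j‖ := norm_sub_le _ _
    nlinarith [norm_nonneg (δ j - r k j), norm_nonneg (δ j), norm_nonneg (r k j),
      sq_nonneg (‖δ j‖ - ‖r k j‖), sq_nonneg (‖δ j‖ + ‖r k j‖)]
  have h1 : ‖hardyCoeff (g - Fk k) n‖
      ≤ Real.sqrt (∑' j, ‖hardyCoeff (g - Fk k) j‖ ^ 2) := by
    calc ‖hardyCoeff (g - Fk k) n‖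
        = Real.sqrt (‖hardyCoeff (g - Fk k) n‖ ^ 2) := by rw [Real.sqrt_sq (norm_nonneg _)]
      _ ≤ _ := Real.sqrt_le_sqrt (Summable.le_tsum hDsum n fun j _ => sq_nonneg _)
  have h2 : (2:ℝ) ≤ ‖hardyCoeff (g - Fk k) n‖ := by
    rw [hDcoeff n]
    have hδn : ‖δ n‖ = M + 2 := by
      simp only [hδdef, if_pos rfl]
      rw [Complex.norm_real, Real.norm_eq_abs, _root_.abs_of_nonneg (by linarith)]
    have hrn : ‖r k n‖ ≤ M := by
      rw [← hFk_coeff k n]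
      exact hMb k
    calc (2:ℝ) = (M + 2) - M := by ring
      _ ≤ ‖δ n‖ - ‖r k n‖ := by rw [hδn]; linarith
      _ ≤ ‖δ n - r k n‖ := norm_sub_norm_le _ _
  have hk2 : Real.sqrt (∑' j, ‖hardyCoeff (g - Fk k) j‖ ^ 2) < 1 := hk
  linarith

theorem not_hypercyclic_of_deriv_EB (a : ℝ) (ha : a ∈ Set.Ioo (0:ℝ) 1)
    (f : ℂ → ℂ) (hf : MemH2 f) (n : ℕ) (hn : 1 ≤ n) (m : ℕ) (C : ℝ)
    (hC : ∀ z ∈ ball (1 - ((a:ℂ))^m) (a^m), ‖iteratedDeriv n f z‖ ≤ C) :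
    ¬ (∀ g : ℂ → ℂ, MemH2 g → ∀ ε > 0, ∃ k : ℕ,
        h2Norm (g - fun z => f ((a:ℂ)^k * z + 1 - (a:ℂ)^k)) < ε) := by
  intro H
  exact not_hypercyclic_of_deriv_EB' a ha f hf n hn m C hC
    (fun g hg ε hε => H g hg ε hε)
end
end

section
/- If g ∈ H²(𝔻) has a limit L ≠ 0 as z → 1 within 𝔻, then the sequence C_{φ_a}^n g = g ∘ φ_{a^n} converges weakly in H²(𝔻) to the constant function L, and consequently the constant function L belongs to the cyclic subspace K_g = closed span of {C_{φ_a}^n g : n ≥ 0}. -/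
open Complex Metric Filter

section Aux

open MeasureTheory Set

lemma orth (n : ℤ) (hn : n ≠ 0) : (∫ θ in (0:ℝ)..(2*Real.pi), Complex.exp (n * θ * I)) = 0 := by
  have h : ∀ θ:ℝ, (n:ℂ) * θ * I = (n*I) * θ := fun θ => by ring
  simp_rw [h]
  rw [integral_exp_mul_complex (by simp [hn, Complex.ext_iff])]
  have h2 : Complex.exp ((n:ℂ)*I*((2*Real.pi:ℝ):ℂ)) = 1 := by
    rw [show (n:ℂ)*I*((2*Real.pi:ℝ):ℂ) = n*(2*Real.pi*I) by push_cast; ring]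
    exact Complex.exp_int_mul_two_pi_mul_I n
  rw [div_eq_zero_iff]
  left
  push_cast at h2 ⊢
  rw [h2]
  simp

lemma hasSum_coeff {f : ℂ → ℂ} (hf : DifferentiableOn ℂ f (ball 0 1)) {z : ℂ}
    (hz : z ∈ ball (0:ℂ) 1) : HasSum (fun n => hardyCoeff f n * z^n) (f z) := by
  have H := Complex.hasSum_taylorSeries_on_ball hf hz
  have e : (fun n => hardyCoeff f n * z^n)
      = fun n : ℕ => (n.factorial : ℂ)⁻¹ • (z-0)^n • iteratedDeriv n f 0 := by
    funext n; simp [hardyCoeff, smul_eq_mul, div_eq_mul_inv]; ring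
  rw [e]; exact H

lemma coeff_summable {f : ℂ → ℂ} (hf : DifferentiableOn ℂ f (ball 0 1)) {r : ℝ}
    (h0 : 0 ≤ r) (h1 : r < 1) : Summable (fun n => ‖hardyCoeff f n‖ * r^n) := by
  set r' : ℝ := (1+r)/2 with hr'
  have hr0 : 0 < r' := by positivity
  have hrr : r < r' := by rw [hr']; linarith
  have hr1 : r' < 1 := by rw [hr']; linarith
  have hz : ((r':ℝ):ℂ) ∈ ball (0:ℂ) 1 := by
    rw [mem_ball_zero_iff]
    simp only [Complex.norm_real, Real.norm_eq_abs]
    rw [_root_.abs_of_nonneg hr0.le]; exact hr1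
  have H := (hasSum_coeff hf hz).summable.tendsto_atTop_zero
  have Hn : Tendsto (fun n => ‖hardyCoeff f n‖ * r'^n) atTop (nhds 0) := by
    have := H.norm
    simpa [_root_.abs_of_nonneg hr0.le] using this
  have ev : ∀ᶠ n in atTop, ‖hardyCoeff f n‖ * r'^n ≤ 1 :=
    (Hn.eventually_lt_const (by norm_num)).mono fun n h => h.le
  apply Summable.of_norm_bounded_eventually_nat (g := fun n => (r/r')^n)
  · exact summable_geometric_of_lt_one (by positivity) (by rw [div_lt_one hr0]; exact hrr)
  · filter_upwards [ev] with n h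
    have hnn : (0:ℝ) ≤ ‖hardyCoeff f n‖ * r^n := by positivity
    rw [Real.norm_of_nonneg hnn]
    have hpow : (r/r')^n * r'^n = r^n := by rw [← mul_pow, div_mul_cancel₀ _ hr0.ne']
    have : ‖hardyCoeff f n‖ * r^n = (‖hardyCoeff f n‖ * r'^n) * (r/r')^n := by
      rw [← hpow]; ring
    rw [this]
    calc (‖hardyCoeff f n‖ * r'^n) * (r/r')^n ≤ 1 * (r/r')^n := by
          apply mul_le_mul_of_nonneg_right h; positivity
      _ = (r/r')^n := one_mul _

lemma znorm (r : ℝ) (h0 : 0 ≤ r) (θ : ℝ) : ‖(r:ℂ) * Complex.exp (θ*I)‖ = r := by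
  rw [norm_mul, Complex.norm_exp_ofReal_mul_I, mul_one, Complex.norm_real,
    Real.norm_eq_abs, _root_.abs_of_nonneg h0]

lemma zcont (r : ℝ) : Continuous fun θ:ℝ => (r:ℂ) * Complex.exp (θ*I) := by
  exact continuous_const.mul (Complex.continuous_exp.comp
    ((Complex.continuous_ofReal).mul continuous_const))

lemma zorth (r : ℝ) (m k : ℕ) :
    (∫ θ in Ioc (0:ℝ) (2*Real.pi),
      ((r:ℂ) * Complex.exp (θ*I))^m * (starRingEnd ℂ) (((r:ℂ) * Complex.exp (θ*I))^k))
    = if m = k then (((2*Real.pi) * r^(m+k) : ℝ) : ℂ) else 0 := by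
  have hpt : ∀ θ:ℝ, ((r:ℂ)*Complex.exp (θ*I))^m
      * (starRingEnd ℂ) (((r:ℂ)*Complex.exp (θ*I))^k)
      = (r:ℂ)^(m+k) * Complex.exp ((((m:ℤ)-(k:ℤ)):ℂ) * θ * I) := by
    intro θ
    have hc : (starRingEnd ℂ) ((r:ℂ) * Complex.exp (θ*I)) = (r:ℂ) * Complex.exp (-θ*I) := by
      rw [map_mul, Complex.conj_ofReal, ← Complex.exp_conj]
      congr 1
      simp [Complex.ext_iff]
    rw [map_pow, hc, mul_pow, mul_pow, ← Complex.exp_nat_mul, ← Complex.exp_nat_mul,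
      ← mul_assoc, mul_assoc ((r:ℂ)^m), mul_comm (Complex.exp _) ((r:ℂ)^k), ← mul_assoc,
      ← pow_add, mul_assoc, ← Complex.exp_add]
    congr 1
    push_cast
    ring
  simp_rw [hpt]
  rw [MeasureTheory.integral_const_mul]
  by_cases h : m = k
  · subst h
    simp only [sub_self, Int.cast_zero, zero_mul, Complex.exp_zero]
    rw [MeasureTheory.setIntegral_const]
    simp only [if_pos rfl, Real.volume_real_Ioc_of_le (by positivity : (0:ℝ) ≤ 2*Real.pi), sub_zero]
    push_cast
    simp [smul_eq_mul]
    ring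
  · have hne : ((m:ℤ) - k) ≠ 0 := sub_ne_zero.mpr (by exact_mod_cast h)
    rw [← intervalIntegral.integral_of_le (by positivity : (0:ℝ) ≤ 2*Real.pi)]
    have := orth _ hne
    push_cast at this ⊢
    rw [this]
    simp [h]

lemma fourier_coeff {f : ℂ → ℂ} (hf : DifferentiableOn ℂ f (ball 0 1)) {r : ℝ}
    (h0 : 0 ≤ r) (h1 : r < 1) (k : ℕ) :
    (∫ θ in Ioc (0:ℝ) (2*Real.pi),
      f ((r:ℂ) * Complex.exp (θ*I)) * (starRingEnd ℂ) (((r:ℂ)*Complex.exp (θ*I))^k))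
    = hardyCoeff f k * (((2*Real.pi) * r^(2*k) : ℝ):ℂ) := by
  set z : ℝ → ℂ := fun θ => (r:ℂ) * Complex.exp (θ*I) with hzdef
  have hzb : ∀ θ:ℝ, z θ ∈ ball (0:ℂ) 1 := fun θ => by
    rw [mem_ball_zero_iff, znorm r h0]; exact h1
  set F : ℕ → ℝ → ℂ := fun m θ => hardyCoeff f m * ((z θ)^m * (starRingEnd ℂ) ((z θ)^k))
    with hFdef
  have hInt : ∀ m, Integrable (F m) (volume.restrict (Ioc (0:ℝ) (2*Real.pi))) := by
    intro m
    apply Continuous.integrableOn_Ioc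
    exact continuous_const.mul (((zcont r).pow m).mul
      (Complex.continuous_conj.comp ((zcont r).pow k)))
  have hFnorm : ∀ m θ, ‖F m θ‖ = (‖hardyCoeff f m‖ * r^m) * r^k := by
    intro m θ
    have hz' : ‖z θ‖ = r := znorm r h0 θ
    rw [hFdef]
    simp only [norm_mul, norm_pow, RCLike.norm_conj, znorm r h0, hz']
    ring
  have hSum : Summable (fun m => ∫ θ in Ioc (0:ℝ) (2*Real.pi), ‖F m θ‖) := by
    have : (fun m => ∫ θ in Ioc (0:ℝ) (2*Real.pi), ‖F m θ‖)
        = fun m => (2*Real.pi) * ((‖hardyCoeff f m‖ * r^m) * r^k) := by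
      funext m
      simp_rw [hFnorm m]
      rw [MeasureTheory.setIntegral_const, Real.volume_real_Ioc_of_le (by positivity), sub_zero,
        smul_eq_mul]
    rw [this]
    exact (((coeff_summable hf h0 h1).mul_right (r^k)).mul_left (2*Real.pi))
  have key := MeasureTheory.hasSum_integral_of_summable_integral_norm hInt hSum
  have htsum : ∀ θ : ℝ, (∑' m, F m θ) = f (z θ) * (starRingEnd ℂ) ((z θ)^k) := by
    intro θ
    have h1' := (hasSum_coeff hf (hzb θ)).mul_right ((starRingEnd ℂ) ((z θ)^k))
    have : (fun m => hardyCoeff f m * (z θ)^m * (starRingEnd ℂ) ((z θ)^k)) = fun m => F m θ := by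
      funext m; rw [hFdef]; ring
    rw [this] at h1'
    exact h1'.tsum_eq
  have hintF : ∀ m, (∫ θ in Ioc (0:ℝ) (2*Real.pi), F m θ)
      = if m = k then hardyCoeff f k * (((2*Real.pi) * r^(2*k) : ℝ):ℂ) else 0 := by
    intro m
    rw [hFdef]
    simp only
    rw [MeasureTheory.integral_const_mul, zorth r m k]
    by_cases h : m = k
    · subst h
      simp only [if_pos rfl]
      norm_num [two_mul]
    · simp [h]
  have key2 : HasSum (fun m => if m = k then hardyCoeff f k * (((2*Real.pi) * r^(2*k) : ℝ):ℂ) else 0)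
      (∫ θ in Ioc (0:ℝ) (2*Real.pi), f (z θ) * (starRingEnd ℂ) ((z θ)^k)) := by
    have e1 : (fun m => ∫ θ in Ioc (0:ℝ) (2*Real.pi), F m θ)
        = fun m => if m = k then hardyCoeff f k * (((2*Real.pi) * r^(2*k) : ℝ):ℂ) else 0 :=
      funext hintF
    have := key
    rw [e1] at this
    have e2 : (∫ θ in Ioc (0:ℝ) (2*Real.pi), (∑' m, F m θ))
        = ∫ θ in Ioc (0:ℝ) (2*Real.pi), f (z θ) * (starRingEnd ℂ) ((z θ)^k) := by
      apply MeasureTheory.integral_congr_ae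
      exact Filter.Eventually.of_forall htsum
    rwa [e2] at this
  exact (key2.unique (hasSum_ite_eq k _))

lemma parseval_r {f : ℂ → ℂ} (hf : DifferentiableOn ℂ f (ball 0 1)) {M : ℝ}
    (hM : ∀ z ∈ ball (0:ℂ) 1, ‖f z‖ ≤ M) {r : ℝ} (h0 : 0 ≤ r) (h1 : r < 1) (s : Finset ℕ) :
    ∑ k ∈ s, ‖hardyCoeff f k‖^2 * r^(2*k) ≤ M^2 := by
  set z : ℝ → ℂ := fun θ => (r:ℂ) * Complex.exp (θ*I) with hzdef
  have hzb : ∀ θ:ℝ, z θ ∈ ball (0:ℂ) 1 := fun θ => by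
    rw [mem_ball_zero_iff, znorm r h0]; exact h1
  have hcz : Continuous z := zcont r
  set h : ℝ → ℂ := fun θ => f (z θ) with hhdef
  have hch : Continuous h := hf.continuousOn.comp_continuous hcz hzb
  set P : ℝ → ℂ := fun θ => ∑ k ∈ s, hardyCoeff f k * (z θ)^k with hPdef
  have hcP : Continuous P := by
    apply continuous_finset_sum
    intro k _
    exact continuous_const.mul (hcz.pow k)
  set Q : ℝ := ∑ k ∈ s, ‖hardyCoeff f k‖^2 * r^(2*k) with hQdef
  -- E1 : ∫ h * conj P = 2π Q
  have E1 : (∫ θ in Ioc (0:ℝ) (2*Real.pi), h θ * (starRingEnd ℂ) (P θ))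
      = (((2*Real.pi) * Q : ℝ) : ℂ) := by
    have hpt : ∀ θ, h θ * (starRingEnd ℂ) (P θ)
        = ∑ k ∈ s, (starRingEnd ℂ) (hardyCoeff f k) * (h θ * (starRingEnd ℂ) ((z θ)^k)) := by
      intro θ
      rw [hPdef]
      simp only [map_sum, map_mul, Finset.mul_sum]
      apply Finset.sum_congr rfl
      intro k _
      ring
    simp_rw [hpt]
    rw [MeasureTheory.integral_finset_sum]
    · have : ∀ k ∈ s, (∫ θ in Ioc (0:ℝ) (2*Real.pi),
          (starRingEnd ℂ) (hardyCoeff f k) * (h θ * (starRingEnd ℂ) ((z θ)^k)))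
          = ((‖hardyCoeff f k‖^2 * ((2*Real.pi) * r^(2*k)) : ℝ) : ℂ) := by
        intro k _
        rw [MeasureTheory.integral_const_mul, fourier_coeff hf h0 h1 k, ← mul_assoc,
          mul_comm ((starRingEnd ℂ) (hardyCoeff f k)) (hardyCoeff f k), Complex.mul_conj,
          Complex.normSq_eq_norm_sq]
        push_cast
        ring
      rw [Finset.sum_congr rfl this]
      rw [hQdef]
      push_cast
      rw [Finset.mul_sum]
      apply Finset.sum_congr rfl
      intro k _
      ring
    · intro k _
      apply Continuous.integrableOn_Ioc
      exact continuous_const.mul (hch.mul (Complex.continuous_conj.comp (hcz.pow k)))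
  -- E2 : ∫ P * conj P = 2π Q
  have E2 : (∫ θ in Ioc (0:ℝ) (2*Real.pi), P θ * (starRingEnd ℂ) (P θ))
      = (((2*Real.pi) * Q : ℝ) : ℂ) := by
    have hpt : ∀ θ, P θ * (starRingEnd ℂ) (P θ)
        = ∑ j ∈ s, ∑ k ∈ s, (hardyCoeff f j * (starRingEnd ℂ) (hardyCoeff f k))
            * ((z θ)^j * (starRingEnd ℂ) ((z θ)^k)) := by
      intro θ
      rw [hPdef]
      simp only [map_sum]
      rw [Finset.sum_mul_sum]
      apply Finset.sum_congr rfl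
      intro j _
      apply Finset.sum_congr rfl
      intro k _
      rw [map_mul]
      ring
    simp_rw [hpt]
    rw [MeasureTheory.integral_finset_sum]
    · have hj : ∀ j ∈ s, (∫ θ in Ioc (0:ℝ) (2*Real.pi), ∑ k ∈ s,
          (hardyCoeff f j * (starRingEnd ℂ) (hardyCoeff f k)) * ((z θ)^j * (starRingEnd ℂ) ((z θ)^k)))
          = ((‖hardyCoeff f j‖^2 * ((2*Real.pi) * r^(2*j)) : ℝ) : ℂ) := by
        intro j hjs
        rw [MeasureTheory.integral_finset_sum]
        · have : ∀ k ∈ s, (∫ θ in Ioc (0:ℝ) (2*Real.pi),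
              (hardyCoeff f j * (starRingEnd ℂ) (hardyCoeff f k)) * ((z θ)^j * (starRingEnd ℂ) ((z θ)^k)))
              = if j = k then ((‖hardyCoeff f j‖^2 * ((2*Real.pi) * r^(2*j)) : ℝ) : ℂ) else 0 := by
            intro k _
            rw [MeasureTheory.integral_const_mul, zorth r j k]
            by_cases hjk : j = k
            · subst hjk
              rw [if_pos rfl, if_pos rfl,
                mul_comm (hardyCoeff f j) ((starRingEnd ℂ) (hardyCoeff f j)),
                mul_comm ((starRingEnd ℂ) (hardyCoeff f j)) (hardyCoeff f j), Complex.mul_conj,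
                Complex.normSq_eq_norm_sq,
                show 2*j = j + j from two_mul j]
              push_cast
              ring
            · rw [if_neg hjk, if_neg hjk, mul_zero]
          rw [Finset.sum_congr rfl this, Finset.sum_ite_eq s j
            (fun _ => ((‖hardyCoeff f j‖^2 * ((2*Real.pi) * r^(2*j)) : ℝ) : ℂ)), if_pos hjs]
        · intro k _
          apply Continuous.integrableOn_Ioc
          exact continuous_const.mul ((hcz.pow j).mul (Complex.continuous_conj.comp (hcz.pow k)))
      rw [Finset.sum_congr rfl hj, hQdef]
      push_cast
      rw [Finset.mul_sum]
      apply Finset.sum_congr rfl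
      intro k _
      ring
    · intro j _
      apply Continuous.integrableOn_Ioc
      apply continuous_finset_sum
      intro k _
      exact continuous_const.mul ((hcz.pow j).mul (Complex.continuous_conj.comp (hcz.pow k)))
  -- nonneg + expansion
  have hIhP : IntegrableOn (fun θ => h θ * (starRingEnd ℂ) (P θ)) (Ioc (0:ℝ) (2*Real.pi)) := by
    apply Continuous.integrableOn_Ioc
    exact hch.mul (Complex.continuous_conj.comp hcP)
  have hIPP : IntegrableOn (fun θ => P θ * (starRingEnd ℂ) (P θ)) (Ioc (0:ℝ) (2*Real.pi)) := by
    apply Continuous.integrableOn_Ioc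
    exact hcP.mul (Complex.continuous_conj.comp hcP)
  have hInormh : IntegrableOn (fun θ => ‖h θ‖^2) (Ioc (0:ℝ) (2*Real.pi)) :=
    Continuous.integrableOn_Ioc (by exact (hch.norm.pow 2))
  have hInormP : IntegrableOn (fun θ => ‖P θ‖^2) (Ioc (0:ℝ) (2*Real.pi)) :=
    Continuous.integrableOn_Ioc (by exact (hcP.norm.pow 2))
  have hIre : IntegrableOn (fun θ => (h θ * (starRingEnd ℂ) (P θ)).re) (Ioc (0:ℝ) (2*Real.pi)) :=
    Continuous.integrableOn_Ioc (Complex.continuous_re.comp'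
      (hch.mul (Complex.continuous_conj.comp hcP)))
  have expand : ∀ θ, ‖h θ - P θ‖^2
      = ‖h θ‖^2 - 2 * (h θ * (starRingEnd ℂ) (P θ)).re + ‖P θ‖^2 := by
    intro θ
    rw [Complex.sq_norm, Complex.sq_norm, Complex.sq_norm, Complex.normSq_sub]
    ring
  have nonneg : (0:ℝ) ≤ ∫ θ in Ioc (0:ℝ) (2*Real.pi), ‖h θ - P θ‖^2 :=
    MeasureTheory.integral_nonneg (fun θ => by positivity)
  have split : (∫ θ in Ioc (0:ℝ) (2*Real.pi), ‖h θ - P θ‖^2)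
      = (∫ θ in Ioc (0:ℝ) (2*Real.pi), ‖h θ‖^2)
        - 2 * ((2*Real.pi) * Q) + (2*Real.pi) * Q := by
    simp_rw [expand]
    rw [MeasureTheory.integral_add (by exact (hInormh.sub (hIre.const_mul 2))) hInormP,
      MeasureTheory.integral_sub hInormh (hIre.const_mul 2)]
    have hre1 : (∫ θ in Ioc (0:ℝ) (2*Real.pi), (h θ * (starRingEnd ℂ) (P θ)).re)
        = 2*Real.pi*Q := by
      have h' := integral_re hIhP
      simp only [RCLike.re_eq_complex_re] at h'
      rw [h', E1, Complex.ofReal_re]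
    have hre2 : (∫ θ in Ioc (0:ℝ) (2*Real.pi), ‖P θ‖^2) = 2*Real.pi*Q := by
      have hp : ∀ θ, ‖P θ‖^2 = (P θ * (starRingEnd ℂ) (P θ)).re := by
        intro θ
        rw [Complex.mul_conj, Complex.ofReal_re, ← Complex.sq_norm]
      simp_rw [hp]
      have h' := integral_re hIPP
      simp only [RCLike.re_eq_complex_re] at h'
      rw [h', E2, Complex.ofReal_re]
    rw [MeasureTheory.integral_const_mul, hre1, hre2]
  have hbound : (∫ θ in Ioc (0:ℝ) (2*Real.pi), ‖h θ‖^2) ≤ (2*Real.pi) * M^2 := by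
    have : (∫ θ in Ioc (0:ℝ) (2*Real.pi), (M^2:ℝ)) = (2*Real.pi) * M^2 := by
      rw [MeasureTheory.setIntegral_const, Real.volume_real_Ioc_of_le (by positivity), sub_zero,
        smul_eq_mul]
    rw [← this]
    apply MeasureTheory.setIntegral_mono_on hInormh
      (Continuous.integrableOn_Ioc continuous_const) measurableSet_Ioc
    intro θ _
    have := hM (z θ) (hzb θ)
    have h2 : (0:ℝ) ≤ ‖h θ‖ := norm_nonneg _
    nlinarith
  have : (2*Real.pi) * Q ≤ (2*Real.pi) * M^2 := by nlinarith [split, nonneg, hbound]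
  have hpi : (0:ℝ) < 2*Real.pi := by positivity
  exact le_of_mul_le_mul_left this hpi

lemma parseval_finset {f : ℂ → ℂ} (hf : DifferentiableOn ℂ f (ball 0 1)) {M : ℝ}
    (hM : ∀ z ∈ ball (0:ℂ) 1, ‖f z‖ ≤ M) (s : Finset ℕ) :
    ∑ k ∈ s, ‖hardyCoeff f k‖^2 ≤ M^2 := by
  set u : ℕ → ℝ := fun j => 1 - 1/(j+1) with hu
  have hu0 : ∀ j, 0 ≤ u j := by
    intro j
    rw [hu]
    simp only [sub_nonneg]
    rw [div_le_one (by positivity)]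
    linarith [Nat.cast_nonneg (α := ℝ) j]
  have hu1 : ∀ j, u j < 1 := by
    intro j
    rw [hu]
    simp only [sub_lt_self_iff]
    positivity
  have hulim : Tendsto u atTop (nhds 1) := by
    rw [hu]
    have : Tendsto (fun j : ℕ => 1/((j:ℝ)+1)) atTop (nhds 0) := tendsto_one_div_add_atTop_nhds_zero_nat
    simpa using (tendsto_const_nhds (x := (1:ℝ))).sub this
  have key : ∀ j, ∑ k ∈ s, ‖hardyCoeff f k‖^2 * (u j)^(2*k) ≤ M^2 :=
    fun j => parseval_r hf hM (hu0 j) (hu1 j) s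
  have tend : Tendsto (fun j => ∑ k ∈ s, ‖hardyCoeff f k‖^2 * (u j)^(2*k)) atTop
      (nhds (∑ k ∈ s, ‖hardyCoeff f k‖^2 * 1^(2*k))) := by
    apply tendsto_finset_sum
    intro k _
    exact (tendsto_const_nhds.mul (hulim.pow (2*k)))
  have := le_of_tendsto tend (Eventually.of_forall key)
  simpa using this

lemma h2_summable_of_bounded {f : ℂ → ℂ} (hf : DifferentiableOn ℂ f (ball 0 1)) {M : ℝ}
    (hM : ∀ z ∈ ball (0:ℂ) 1, ‖f z‖ ≤ M) :
    Summable (fun n => ‖hardyCoeff f n‖^2) ∧ (∑' n, ‖hardyCoeff f n‖^2) ≤ M^2 := by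
  have hsum : Summable (fun n => ‖hardyCoeff f n‖^2) := by
    apply summable_of_sum_range_le (c := M^2) (fun n => by positivity)
    intro n
    exact parseval_finset hf hM (Finset.range n)
  exact ⟨hsum, Summable.tsum_le_of_sum_range_le hsum
    (fun n => parseval_finset hf hM (Finset.range n))⟩

lemma tsum_cs {u v : ℕ → ℝ} (hu : ∀ n, 0 ≤ u n) (hv : ∀ n, 0 ≤ v n)
    (hU : Summable (fun n => u n^2)) (hV : Summable (fun n => v n^2)) :
    Summable (fun n => u n * v n) ∧
      ∑' n, u n * v n ≤ Real.sqrt (∑' n, u n^2) * Real.sqrt (∑' n, v n^2) := by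
  have hsum : Summable (fun n => u n * v n) := by
    apply Summable.of_nonneg_of_le (fun n => mul_nonneg (hu n) (hv n))
      (fun n => ?_) (by exact ((hU.add hV).div_const 2))
    have := two_mul_le_add_sq (u n) (v n)
    show u n * v n ≤ (u n^2 + v n^2)/2
    linarith
  refine ⟨hsum, ?_⟩
  apply Summable.tsum_le_of_sum_le hsum
  intro s
  have h1 : (∑ k ∈ s, u k * v k)^2 ≤ (∑ k ∈ s, u k^2) * (∑ k ∈ s, v k^2) :=
    Finset.sum_mul_sq_le_sq_mul_sq s u v
  have h2 : (∑ k ∈ s, u k^2) ≤ ∑' n, u n^2 :=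
    hU.sum_le_tsum s (fun n _ => by positivity)
  have h3 : (∑ k ∈ s, v k^2) ≤ ∑' n, v n^2 :=
    hV.sum_le_tsum s (fun n _ => by positivity)
  have h4 : (0:ℝ) ≤ ∑ k ∈ s, u k * v k :=
    Finset.sum_nonneg (fun k _ => mul_nonneg (hu k) (hv k))
  have h5 : (∑ k ∈ s, u k * v k)^2 ≤ (∑' n, u n^2) * (∑' n, v n^2) := by
    calc (∑ k ∈ s, u k * v k)^2 ≤ (∑ k ∈ s, u k^2) * (∑ k ∈ s, v k^2) := h1
      _ ≤ (∑' n, u n^2) * (∑' n, v n^2) := by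
          apply mul_le_mul h2 h3 (Finset.sum_nonneg (fun k _ => by positivity))
            ((tsum_nonneg (fun n => by positivity)))
  calc (∑ k ∈ s, u k * v k) = Real.sqrt ((∑ k ∈ s, u k * v k)^2) := (Real.sqrt_sq h4).symm
    _ ≤ Real.sqrt ((∑' n, u n^2) * (∑' n, v n^2)) := Real.sqrt_le_sqrt h5
    _ = Real.sqrt (∑' n, u n^2) * Real.sqrt (∑' n, v n^2) :=
        Real.sqrt_mul (tsum_nonneg (fun n => by positivity)) _

lemma iteratedDeriv_zero_fun (n : ℕ) : iteratedDeriv n (fun _ : ℂ => (0:ℂ)) = fun _ => 0 := by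
  induction n with
  | zero => simp [iteratedDeriv_zero]
  | succ n ih => rw [iteratedDeriv_succ, ih]; simp

lemma iteratedDeriv_const_fun (n : ℕ) (hn : n ≠ 0) (c : ℂ) :
    iteratedDeriv n (fun _ : ℂ => c) = fun _ => 0 := by
  obtain ⟨m, rfl⟩ := Nat.exists_eq_succ_of_ne_zero hn
  rw [iteratedDeriv_succ']
  simp only [deriv_const']
  exact iteratedDeriv_zero_fun m

lemma hardyCoeff_const (c : ℂ) (k : ℕ) :
    hardyCoeff (fun _ => c) k = if k = 0 then c else 0 := by
  unfold hardyCoeff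
  by_cases h : k = 0
  · subst h; simp [iteratedDeriv_zero]
  · rw [iteratedDeriv_const_fun k h c]
    simp [h]

lemma hardyCoeff_const_sub (F : ℂ → ℂ) (L : ℂ) (k : ℕ) :
    hardyCoeff (fun z => L - F z) k = hardyCoeff (fun _ => L) k - hardyCoeff F k := by
  unfold hardyCoeff
  rcases Nat.eq_zero_or_pos k with h | h
  · subst h
    simp [iteratedDeriv_zero, sub_div]
  · have e1 : iteratedDeriv k (fun z => L - F z) 0 = - iteratedDeriv k F 0 := by
      rw [iteratedDeriv_const_sub h L, iteratedDeriv_neg]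
    rw [e1, iteratedDeriv_const_fun k h.ne' L]
    simp [neg_div]

end Aux

open MeasureTheory Set in
theorem constants_in_Kg (a : ℝ) (ha : a ∈ Set.Ioo (0:ℝ) 1) (g : ℂ → ℂ) (hg : MemH2 g)
    (L : ℂ) (hL : L ≠ 0)
    (hlim : Tendsto g (nhdsWithin 1 (ball (0:ℂ) 1)) (nhds L)) :
    (∀ h : ℂ → ℂ, MemH2 h →
      Tendsto (fun n : ℕ => h2Inner (fun z => g ((a:ℂ)^n * z + 1 - (a:ℂ)^n)) h)
        atTop (nhds (h2Inner (fun _ => L) h))) ∧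
    (∀ ε > 0, ∃ p ∈ Submodule.span ℂ {h : ℂ → ℂ | ∃ n : ℕ,
        h = fun z => g ((a:ℂ)^n * z + 1 - (a:ℂ)^n)},
      h2Norm ((fun _ => L) - p) < ε) := by
  obtain ⟨ha0, ha1⟩ := ha
  have hgdiff : DifferentiableOn ℂ g (ball 0 1) := hg.1.differentiableOn
  have hanpos : ∀ n : ℕ, (0:ℝ) < a^n := fun n => pow_pos ha0 n
  have hanle : ∀ n : ℕ, a^n ≤ 1 := fun n => pow_le_one₀ ha0.le ha1.le
  have hnorman : ∀ n : ℕ, ‖((a:ℂ))^n‖ = a^n := by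
    intro n
    rw [← Complex.ofReal_pow, Complex.norm_real, Real.norm_eq_abs,
      _root_.abs_of_nonneg (hanpos n).le]
  have hmaps : ∀ (n : ℕ), ∀ z ∈ ball (0:ℂ) 1, (a:ℂ)^n * z + 1 - (a:ℂ)^n ∈ ball (0:ℂ) 1 := by
    intro n z hz
    rw [mem_ball_zero_iff] at hz ⊢
    have e : (a:ℂ)^n * z + 1 - (a:ℂ)^n = (a:ℂ)^n * z + ((1 - a^n : ℝ):ℂ) := by
      push_cast; ring
    rw [e]
    calc ‖(a:ℂ)^n * z + ((1 - a^n : ℝ):ℂ)‖ ≤ ‖(a:ℂ)^n * z‖ + ‖((1 - a^n : ℝ):ℂ)‖ :=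
          norm_add_le _ _
      _ = a^n * ‖z‖ + (1 - a^n) := by
          rw [norm_mul, hnorman n, Complex.norm_real, Real.norm_eq_abs,
            _root_.abs_of_nonneg (by linarith [hanle n])]
      _ < a^n * 1 + (1 - a^n) := by
          have := hanpos n
          have h1 : a^n * ‖z‖ < a^n * 1 := by
            apply mul_lt_mul_of_pos_left hz this
          linarith
      _ = 1 := by ring
  have hgn_diff : ∀ n : ℕ,
      DifferentiableOn ℂ (fun z => g ((a:ℂ)^n * z + 1 - (a:ℂ)^n)) (ball 0 1) := by
    intro n
    have hinner : DifferentiableOn ℂ (fun z : ℂ => (a:ℂ)^n * z + 1 - (a:ℂ)^n) (ball 0 1) :=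
      (((differentiable_id.const_mul ((a:ℂ)^n)).add_const 1).sub_const
        ((a:ℂ)^n)).differentiableOn
    exact DifferentiableOn.comp hgdiff hinner (fun z hz => hmaps n z hz)
  have key : ∀ ε' : ℝ, 0 < ε' → ∃ N : ℕ, ∀ n ≥ N, ∀ z ∈ ball (0:ℂ) 1,
      ‖L - g ((a:ℂ)^n * z + 1 - (a:ℂ)^n)‖ ≤ ε' := by
    intro ε' hε'
    rw [Metric.tendsto_nhdsWithin_nhds] at hlim
    obtain ⟨δ, hδ0, hδ⟩ := hlim ε' hε'
    obtain ⟨N, hNδ⟩ : ∃ N : ℕ, a^N < δ/4 := by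
      have h1 := (tendsto_pow_atTop_nhds_zero_of_lt_one ha0.le ha1).eventually_lt_const
        (show (0:ℝ) < δ/4 by linarith)
      exact h1.exists
    refine ⟨N, fun n hn z hz => ?_⟩
    have han : a^n ≤ a^N := pow_le_pow_of_le_one ha0.le ha1.le hn
    have hw : (a:ℂ)^n * z + 1 - (a:ℂ)^n ∈ ball (0:ℂ) 1 := hmaps n z hz
    have hdist : dist ((a:ℂ)^n * z + 1 - (a:ℂ)^n) 1 < δ := by
      rw [dist_eq_norm]
      have e : ((a:ℂ)^n * z + 1 - (a:ℂ)^n) - 1 = (a:ℂ)^n * (z - 1) := by ring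
      rw [e, norm_mul, hnorman n]
      have hz1 : ‖z - 1‖ < 2 := by
        rw [mem_ball_zero_iff] at hz
        calc ‖z - 1‖ ≤ ‖z‖ + ‖(1:ℂ)‖ := norm_sub_le _ _
          _ < 2 := by rw [norm_one]; linarith
      calc a^n * ‖z - 1‖ ≤ a^N * ‖z - 1‖ := by
            apply mul_le_mul_of_nonneg_right han (norm_nonneg _)
        _ ≤ a^N * 2 := by
            apply mul_le_mul_of_nonneg_left hz1.le (hanpos N).le
        _ < δ := by linarith
    have hres := hδ hw hdist
    rw [dist_eq_norm] at hres
    rw [norm_sub_rev]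
    exact hres.le
  constructor
  · intro h hh
    set B := Real.sqrt (∑' k, ‖hardyCoeff h k‖^2) with hBdef
    have hB0 : 0 ≤ B := Real.sqrt_nonneg _
    rw [Metric.tendsto_atTop]
    intro ε hε
    set ε' := ε / (2*(B+1)) with hε'def
    have hε'0 : 0 < ε' := by
      rw [hε'def]; positivity
    obtain ⟨N, hNkey⟩ := key ε' hε'0
    refine ⟨N, fun n hn => ?_⟩
    set gn : ℂ → ℂ := fun z => g ((a:ℂ)^n * z + 1 - (a:ℂ)^n) with hgn
    set Fn : ℂ → ℂ := fun z => L - gn z with hFn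
    have hFdiff : DifferentiableOn ℂ Fn (ball 0 1) :=
      (differentiableOn_const L).sub (hgn_diff n)
    have hFbound : ∀ z ∈ ball (0:ℂ) 1, ‖Fn z‖ ≤ ε' := fun z hz => hNkey n hn z hz
    obtain ⟨hFsum, hFle⟩ := h2_summable_of_bounded hFdiff hFbound
    have hgnsum : Summable (fun k => ‖hardyCoeff gn k‖^2) := by
      have hgb : ∀ z ∈ ball (0:ℂ) 1, ‖gn z‖ ≤ ‖L‖ + ε' := by
        intro z hz
        have hb := hFbound z hz
        have e : gn z = L - Fn z := by rw [hFn]; ring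
        rw [e]
        calc ‖L - Fn z‖ ≤ ‖L‖ + ‖Fn z‖ := norm_sub_le _ _
          _ ≤ ‖L‖ + ε' := by linarith
      exact (h2_summable_of_bounded (hgn_diff n) hgb).1
    have hsum_h : Summable (fun k => ‖hardyCoeff h k‖^2) := hh.2
    have habs_gn : Summable (fun k => ‖hardyCoeff gn k‖ * ‖hardyCoeff h k‖) :=
      (tsum_cs (fun k => norm_nonneg _) (fun k => norm_nonneg _) hgnsum hsum_h).1
    have hprod_gn : Summable (fun k => hardyCoeff gn k * (starRingEnd ℂ) (hardyCoeff h k)) := by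
      apply Summable.of_norm
      simpa [norm_mul] using habs_gn
    have hprod_L : Summable (fun k =>
        hardyCoeff (fun _ => L) k * (starRingEnd ℂ) (hardyCoeff h k)) := by
      apply summable_of_ne_finset_zero (s := ({0} : Finset ℕ))
      intro k hk
      have hk0 : k ≠ 0 := by simpa using hk
      rw [hardyCoeff_const, if_neg hk0, zero_mul]
    have habs_Fn : Summable (fun k => ‖hardyCoeff Fn k‖ * ‖hardyCoeff h k‖) :=
      (tsum_cs (fun k => norm_nonneg _) (fun k => norm_nonneg _) hFsum hsum_h).1
    have hdiffeq : h2Inner (fun _ => L) h - h2Inner gn h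
        = ∑' k, hardyCoeff Fn k * (starRingEnd ℂ) (hardyCoeff h k) := by
      rw [h2Inner, h2Inner, ← Summable.tsum_sub hprod_L hprod_gn]
      congr 1
      funext k
      have e : hardyCoeff Fn k = hardyCoeff (fun _ => L) k - hardyCoeff gn k := by
        rw [hFn]
        exact hardyCoeff_const_sub gn L k
      rw [e]
      ring
    have hbound : ‖h2Inner (fun _ => L) h - h2Inner gn h‖ ≤ ε' * B := by
      rw [hdiffeq]
      calc ‖∑' k, hardyCoeff Fn k * (starRingEnd ℂ) (hardyCoeff h k)‖
          ≤ ∑' k, ‖hardyCoeff Fn k * (starRingEnd ℂ) (hardyCoeff h k)‖ := by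
            apply norm_tsum_le_tsum_norm
            simpa [norm_mul] using habs_Fn
        _ = ∑' k, ‖hardyCoeff Fn k‖ * ‖hardyCoeff h k‖ := by
            congr 1; funext k; simp [norm_mul]
        _ ≤ Real.sqrt (∑' k, ‖hardyCoeff Fn k‖^2) * Real.sqrt (∑' k, ‖hardyCoeff h k‖^2) :=
            (tsum_cs (fun k => norm_nonneg _) (fun k => norm_nonneg _) hFsum hsum_h).2
        _ ≤ ε' * B := by
            apply mul_le_mul_of_nonneg_right _ hB0
            calc Real.sqrt (∑' k, ‖hardyCoeff Fn k‖^2) ≤ Real.sqrt (ε'^2) :=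
                  Real.sqrt_le_sqrt hFle
              _ = ε' := Real.sqrt_sq hε'0.le
    rw [dist_eq_norm, norm_sub_rev]
    calc ‖h2Inner (fun _ => L) h - h2Inner gn h‖ ≤ ε' * B := hbound
      _ ≤ ε' * (B+1) := by
          apply mul_le_mul_of_nonneg_left (by linarith) hε'0.le
      _ = ε/2 := by
          rw [hε'def]
          field_simp
      _ < ε := by linarith
  · intro ε hε
    obtain ⟨N, hNkey⟩ := key (ε/2) (by linarith)
    refine ⟨fun z => g ((a:ℂ)^N * z + 1 - (a:ℂ)^N), Submodule.subset_span ⟨N, rfl⟩, ?_⟩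
    set gn : ℂ → ℂ := fun z => g ((a:ℂ)^N * z + 1 - (a:ℂ)^N) with hgn
    set Fn : ℂ → ℂ := fun z => L - gn z with hFn
    have hFdiff : DifferentiableOn ℂ Fn (ball 0 1) :=
      (differentiableOn_const L).sub (hgn_diff N)
    have hFbound : ∀ z ∈ ball (0:ℂ) 1, ‖Fn z‖ ≤ ε/2 := fun z hz => hNkey N le_rfl z hz
    obtain ⟨hFsum, hFle⟩ := h2_summable_of_bounded hFdiff hFbound
    have heq : (fun _ : ℂ => L) - gn = Fn := rfl
    rw [heq, h2Norm]
    calc Real.sqrt (∑' k, ‖hardyCoeff Fn k‖^2) ≤ Real.sqrt ((ε/2)^2) := Real.sqrt_le_sqrt hFle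
      _ = ε/2 := Real.sqrt_sq (by linarith)
      _ < ε := by linarith
end

section
/- Let f ∈ H²(𝔻) have finitely many but at least one zero in 𝔻, and let a ∈ (0,1). Then there exists n₀ such that for every n ≥ n₀ the functions f and f ∘ φ_{a^n} are linearly independent; consequently dim K_f ≥ 2. -/
open Complex Metric Filter

theorem finitely_many_zeros_dim_ge_two (a : ℝ) (ha : a ∈ Set.Ioo (0:ℝ) 1)
    (f : ℂ → ℂ) (hf : MemH2 f)
    (hfin : {z ∈ ball (0:ℂ) 1 | f z = 0}.Finite)
    (hex : ∃ z ∈ ball (0:ℂ) 1, f z = 0) :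
    (∃ n₀ : ℕ, ∀ n ≥ n₀,
      LinearIndependent ℂ ![f, fun z => f ((a:ℂ)^n * z + 1 - (a:ℂ)^n)]) ∧
    2 ≤ Module.rank ℂ (Submodule.span ℂ {h : ℂ → ℂ | ∃ k : ℕ,
        h = fun z => f ((a:ℂ)^k * z + 1 - (a:ℂ)^k)}) := by
  obtain ⟨z₀, hz₀b, hz₀⟩ := hex
  have hz₀mem : z₀ ∈ hfin.toFinset := by
    rw [Set.Finite.mem_toFinset]; exact ⟨hz₀b, hz₀⟩
  have hne : hfin.toFinset.Nonempty := ⟨z₀, hz₀mem⟩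
  set K := hfin.toFinset.sup' hne (fun z => ‖z‖) with hKdef
  have hK1 : K < 1 := by
    rw [hKdef, Finset.sup'_lt_iff]
    intro z hz
    rw [Set.Finite.mem_toFinset] at hz
    exact mem_ball_zero_iff.mp hz.1
  have hK0 : (0:ℝ) ≤ K :=
    le_trans (norm_nonneg z₀) (Finset.le_sup' (fun z => ‖z‖) hz₀mem)
  obtain ⟨n₀, hn₀⟩ : ∃ n : ℕ, a ^ n < (1 - K) / 2 :=
    exists_pow_lt_of_lt_one (by linarith) ha.2
  have key : ∀ n ≥ n₀, ∀ z : ℂ, ‖z‖ < 1 → f ((a:ℂ)^n * z + 1 - (a:ℂ)^n) ≠ 0 := by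
    intro n hn z hz hc
    have hb0 : (0:ℝ) < a ^ n := pow_pos ha.1 n
    have hb1 : a ^ n ≤ 1 := pow_le_one₀ ha.1.le ha.2.le
    have hblt : a ^ n < (1 - K) / 2 :=
      lt_of_le_of_lt (pow_le_pow_of_le_one ha.1.le ha.2.le hn) hn₀
    set w : ℂ := (a:ℂ)^n * z + 1 - (a:ℂ)^n with hwdef
    have hcast : ((a ^ n : ℝ) : ℂ) = (a:ℂ)^n := by push_cast; ring
    have hnorm1 : ‖(1 : ℂ) - (a:ℂ)^n‖ = 1 - a ^ n := by
      have he : (1:ℂ) - (a:ℂ)^n = ((1 - a ^ n : ℝ) : ℂ) := by push_cast; ring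
      rw [he, Complex.norm_real, Real.norm_of_nonneg (by linarith)]
    have hnormb : ‖(a:ℂ)^n‖ = a ^ n := by
      rw [← hcast, Complex.norm_real, Real.norm_of_nonneg hb0.le]
    have hwball : ‖w‖ < 1 := by
      calc ‖w‖ = ‖(a:ℂ)^n * z + (1 - (a:ℂ)^n)‖ := by rw [hwdef, add_sub_assoc]
        _ ≤ ‖(a:ℂ)^n * z‖ + ‖(1:ℂ) - (a:ℂ)^n‖ := norm_add_le _ _
        _ = a ^ n * ‖z‖ + (1 - a ^ n) := by rw [norm_mul, hnormb, hnorm1]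
        _ < a ^ n * 1 + (1 - a ^ n) := by
            have := mul_lt_mul_of_pos_left hz hb0; linarith
        _ = 1 := by ring
    have hwlow : K < ‖w‖ := by
      have h1z : ‖(1:ℂ) - z‖ ≤ 2 := by
        calc ‖(1:ℂ) - z‖ ≤ ‖(1:ℂ)‖ + ‖z‖ := norm_sub_le _ _
          _ ≤ 2 := by rw [norm_one]; linarith
      have : ‖(a:ℂ)^n * (1 - z)‖ ≤ a ^ n * 2 := by
        rw [norm_mul, hnormb]
        exact mul_le_mul_of_nonneg_left h1z hb0.le
      have hw2 : w = 1 - (a:ℂ)^n * (1 - z) := by rw [hwdef]; ring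
      have hlb : ‖(1:ℂ)‖ - ‖(a:ℂ)^n * (1 - z)‖ ≤ ‖w‖ := by
        rw [hw2]; exact norm_sub_norm_le _ _
      rw [norm_one] at hlb
      linarith
    have hwmem : w ∈ hfin.toFinset := by
      rw [Set.Finite.mem_toFinset]
      exact ⟨mem_ball_zero_iff.mpr hwball, hc⟩
    have : ‖w‖ ≤ K := Finset.le_sup' (fun z => ‖z‖) hwmem
    linarith
  have lin : ∀ n ≥ n₀,
      LinearIndependent ℂ ![f, fun z => f ((a:ℂ)^n * z + 1 - (a:ℂ)^n)] := by
    intro n hn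
    rw [LinearIndependent.pair_iff]
    intro s t hst
    have ht : t = 0 := by
      have h1 := congrFun hst z₀
      simp only [Pi.add_apply, Pi.smul_apply, smul_eq_mul, Pi.zero_apply, hz₀,
        mul_zero, zero_add] at h1
      have := key n hn z₀ (mem_ball_zero_iff.mp hz₀b)
      exact (mul_eq_zero.mp h1).resolve_right this
    have hs : s = 0 := by
      have hw : f ((a:ℂ)^n * 0 + 1 - (a:ℂ)^n) ≠ 0 :=
        key n hn 0 (by simp)
      have h2 := congrFun hst ((a:ℂ)^n * 0 + 1 - (a:ℂ)^n)
      rw [ht] at h2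
      simp only [Pi.add_apply, Pi.smul_apply, smul_eq_mul, Pi.zero_apply,
        zero_mul, add_zero] at h2
      exact (mul_eq_zero.mp h2).resolve_right hw
    exact ⟨hs, ht⟩
  refine ⟨⟨n₀, lin⟩, ?_⟩
  set S : Set (ℂ → ℂ) := {h : ℂ → ℂ | ∃ k : ℕ,
      h = fun z => f ((a:ℂ)^k * z + 1 - (a:ℂ)^k)} with hSdef
  have hfS : f ∈ Submodule.span ℂ S := by
    apply Submodule.subset_span
    exact ⟨0, by funext z; norm_num⟩
  have hgS : (fun z => f ((a:ℂ)^n₀ * z + 1 - (a:ℂ)^n₀)) ∈ Submodule.span ℂ S :=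
    Submodule.subset_span ⟨n₀, rfl⟩
  set x : Submodule.span ℂ S := ⟨f, hfS⟩
  set y : Submodule.span ℂ S := ⟨_, hgS⟩
  have hli : LinearIndependent ℂ ![x, y] := by
    apply LinearIndependent.of_comp (Submodule.span ℂ S).subtype
    have heq : (Submodule.span ℂ S).subtype ∘ ![x, y]
        = ![f, fun z => f ((a:ℂ)^n₀ * z + 1 - (a:ℂ)^n₀)] := by
      funext i; fin_cases i <;> rfl
    rw [heq]
    exact lin n₀ le_rfl
  have := hli.cardinal_le_rank
  simpa using this
end
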